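/- Let 1 ≤ k ≤ m−1 ≤ n−1 and let {i_1,…,i_k} ⊆ {1,…,n}. There is a constant C depending only on n and k (one may take C = (n−k)^k) such that for every λ ∈ Γ_m, |λ_{i_1} λ_{i_2} ⋯ λ_{i_k}| ≤ C · S_k(λ). -/

import Mathlib

open Finset

/-- The k-th elementary symmetric polynomial of n real variables. -/
noncomputable def S (n : ℕ) (k : ℕ) (lam : Fin n → ℝ) : ℝ :=
  ∑ A ∈ Finset.powersetCard k (Finset.univ : Finset (Fin n)), ∏ i ∈ A, lam i

/-- The Gårding cone Γ_m. -/
def GammaCone (n m : ℕ) : Set (Fin n → ℝ) :=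
  {lam | ∀ k, 1 ≤ k → k ≤ m → 0 < S n k lam}

/-- Restricted elementary symmetric polynomial: the k-th elementary symmetric
polynomial of the variables with indices in T. -/
noncomputable def SRes (n : ℕ) (T : Finset (Fin n)) (k : ℕ) (lam : Fin n → ℝ) : ℝ :=
  ∑ A ∈ Finset.powersetCard k T, ∏ i ∈ A, lam i

variable {n : ℕ}

lemma SRes_zero (T : Finset (Fin n)) (lam : Fin n → ℝ) : SRes n T 0 lam = 1 := by
  simp [SRes]

lemma SRes_of_card_lt {T : Finset (Fin n)} {k : ℕ} (h : T.card < k) (lam : Fin n → ℝ) :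
    SRes n T k lam = 0 := by
  simp [SRes, powersetCard_eq_empty.2 h]

lemma SRes_one (T : Finset (Fin n)) (lam : Fin n → ℝ) : SRes n T 1 lam = ∑ i ∈ T, lam i := by
  rw [SRes, powersetCard_one, Finset.sum_map]
  simp

lemma SRes_erase {T : Finset (Fin n)} {i : Fin n} (hi : i ∈ T) (k : ℕ) (lam : Fin n → ℝ) :
    SRes n T (k+1) lam
      = SRes n (T.erase i) (k+1) lam + lam i * SRes n (T.erase i) k lam := by
  have h1 : T = insert i (T.erase i) := (insert_erase hi).symm
  have hnot : i ∉ T.erase i := notMem_erase i T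
  rw [SRes]
  conv_lhs => rw [h1]
  rw [powersetCard_succ_insert hnot]
  have hdisj : Disjoint (powersetCard (k+1) (T.erase i))
      ((powersetCard k (T.erase i)).image (insert i)) := by
    rw [disjoint_left]
    intro A hA hA'
    obtain ⟨B, hB, rfl⟩ := mem_image.1 hA'
    have : insert i B ⊆ T.erase i := (mem_powersetCard.1 hA).1
    exact hnot (this (mem_insert_self i B))
  rw [sum_union hdisj]
  congr 1
  rw [sum_image]
  · rw [SRes, mul_sum]
    refine sum_congr rfl fun A hA => ?_
    have hiA : i ∉ A := fun h => hnot ((mem_powersetCard.1 hA).1 h)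
    rw [prod_insert hiA]
  · intro A hA B hB hAB
    have hiA : i ∉ A := fun h => hnot ((mem_powersetCard.1 hA).1 h)
    have hiB : i ∉ B := fun h => hnot ((mem_powersetCard.1 hB).1 h)
    have := congrArg (fun s => Finset.erase s i) hAB
    simpa [erase_insert hiA, erase_insert hiB] using this

lemma sum_SRes_erase (T : Finset (Fin n)) (k : ℕ) (lam : Fin n → ℝ) :
    ∑ i ∈ T, SRes n (T.erase i) k lam = ((T.card - k : ℕ) : ℝ) * SRes n T k lam := by
  have hpc : ∀ i : Fin n, powersetCard k (T.erase i)
      = (powersetCard k T).filter (fun A => i ∉ A) := by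
    intro i; ext A
    simp only [mem_powersetCard, mem_filter, subset_erase]
    tauto
  calc ∑ i ∈ T, SRes n (T.erase i) k lam
      = ∑ i ∈ T, ∑ A ∈ powersetCard k T, if i ∉ A then ∏ x ∈ A, lam x else 0 := by
        refine sum_congr rfl fun i _ => ?_
        rw [SRes, hpc i, sum_filter]
    _ = ∑ A ∈ powersetCard k T, ∑ i ∈ T, if i ∉ A then ∏ x ∈ A, lam x else 0 := sum_comm
    _ = ∑ A ∈ powersetCard k T, ((T.card - k : ℕ) : ℝ) * ∏ x ∈ A, lam x := by
        refine sum_congr rfl fun A hA => ?_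
        obtain ⟨hAT, hAcard⟩ := mem_powersetCard.1 hA
        rw [← sum_filter, sum_const, nsmul_eq_mul]
        congr 2
        rw [← sdiff_eq_filter, card_sdiff_of_subset hAT, hAcard]
    _ = ((T.card - k : ℕ) : ℝ) * SRes n T k lam := by rw [SRes, mul_sum]

lemma SRes_pos {T : Finset (Fin n)} {k : ℕ} {lam : Fin n → ℝ}
    (hpos : ∀ i ∈ T, 0 < lam i) (hk : k ≤ T.card) : 0 < SRes n T k lam := by
  refine sum_pos (fun A hA => prod_pos fun i hi => hpos i ((mem_powersetCard.1 hA).1 hi)) ?_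
  exact powersetCard_nonempty.2 hk

lemma count_between {T B : Finset (Fin n)} (hBT : B ⊆ T) {k : ℕ} (hBk : B.card ≤ k) :
    ((powersetCard k T).filter (fun A => B ⊆ A)).card = (T.card - B.card).choose (k - B.card) := by
  rw [← card_sdiff_of_subset hBT, ← card_powersetCard (k - B.card) (T \ B)]
  apply card_bij (fun A _ => A \ B)
  · intro A hA
    obtain ⟨hApc, hAB⟩ := mem_filter.1 hA
    obtain ⟨hAT, hAcard⟩ := mem_powersetCard.1 hApc
    exact mem_powersetCard.2 ⟨sdiff_subset_sdiff hAT le_rfl, by rw [card_sdiff_of_subset hAB, hAcard]⟩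
  · intro A hA A' hA' h
    obtain ⟨hApc, hAB⟩ := mem_filter.1 hA
    obtain ⟨hApc', hAB'⟩ := mem_filter.1 hA'
    have := congrArg (fun s => s ∪ B) h
    simpa [sdiff_union_of_subset hAB, sdiff_union_of_subset hAB'] using this
  · intro C hC
    obtain ⟨hCT, hCcard⟩ := mem_powersetCard.1 hC
    have hdisj : Disjoint C B := disjoint_of_subset_left hCT sdiff_disjoint
    refine ⟨C ∪ B, mem_filter.2 ⟨mem_powersetCard.2 ⟨?_, ?_⟩, subset_union_right⟩, ?_⟩
    · exact union_subset (hCT.trans sdiff_subset) hBT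
    · rw [card_union_of_disjoint hdisj, hCcard]
      omega
    · rw [union_sdiff_cancel_right hdisj]

lemma SRes_shift (T : Finset (Fin n)) (k : ℕ) (lam : Fin n → ℝ) (t : ℝ) :
    SRes n T k (fun i => lam i + t) =
      ∑ r ∈ range (k+1),
        (((T.card - r).choose (k - r) : ℕ) : ℝ) * t ^ (k - r) * SRes n T r lam := by
  classical
  have step1 : SRes n T k (fun i => lam i + t)
      = ∑ A ∈ powersetCard k T, ∑ B ∈ T.powerset,
          if B ⊆ A then (∏ i ∈ B, lam i) * t ^ (k - B.card) else 0 := by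
    refine sum_congr rfl fun A hA => ?_
    obtain ⟨hAT, hAcard⟩ := mem_powersetCard.1 hA
    rw [prod_add]
    rw [← sum_filter]
    have : T.powerset.filter (fun B => B ⊆ A) = A.powerset := by
      ext B; simp only [mem_filter, mem_powerset]
      exact ⟨fun h => h.2, fun h => ⟨h.trans hAT, h⟩⟩
    rw [this]
    refine sum_congr rfl fun B hB => ?_
    have hBA : B ⊆ A := mem_powerset.1 hB
    rw [prod_const, card_sdiff_of_subset hBA, hAcard]
  have step2 : SRes n T k (fun i => lam i + t)
      = ∑ B ∈ T.powerset,
          (((T.card - B.card).choose (k - B.card) : ℕ) : ℝ) * t ^ (k - B.card) *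
            (if B.card ≤ k then (∏ i ∈ B, lam i) else 0) := by
    rw [step1, sum_comm]
    refine sum_congr rfl fun B hB => ?_
    have hBT : B ⊆ T := mem_powerset.1 hB
    rw [← sum_filter]
    rw [sum_const, nsmul_eq_mul]
    by_cases hc : B.card ≤ k
    · rw [count_between hBT hc, if_pos hc]; ring
    · have : (powersetCard k T).filter (fun A => B ⊆ A) = ∅ := by
        rw [filter_eq_empty_iff]
        intro A hA hBA
        exact hc ((card_le_card hBA).trans_eq (mem_powersetCard.1 hA).2)
      rw [this, if_neg hc]
      simp
  rw [step2]
  rw [sum_powerset]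
  have step3 : ∀ r ∈ range (T.card + 1),
      ∑ B ∈ powersetCard r T,
          (((T.card - B.card).choose (k - B.card) : ℕ) : ℝ) * t ^ (k - B.card) *
            (if B.card ≤ k then (∏ i ∈ B, lam i) else 0)
      = (if r ≤ k then (((T.card - r).choose (k - r) : ℕ) : ℝ) * t ^ (k - r) * SRes n T r lam
         else 0) := by
    intro r _
    by_cases hrk : r ≤ k
    · rw [if_pos hrk, SRes, mul_sum]
      refine sum_congr rfl fun B hB => ?_
      rw [(mem_powersetCard.1 hB).2, if_pos hrk]
    · rw [if_neg hrk]
      refine sum_eq_zero fun B hB => ?_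
      rw [(mem_powersetCard.1 hB).2, if_neg hrk, mul_zero]
  rw [sum_congr rfl step3]
  -- now compare ∑_{r ∈ range (T.card+1)} (if r ≤ k then c r else 0) with ∑_{r ∈ range (k+1)} c r
  rcases le_or_gt k T.card with hkT | hkT
  · rw [← sum_filter]
    have : (range (T.card + 1)).filter (fun r => r ≤ k) = range (k+1) := by
      ext r; simp only [mem_filter, mem_range]; omega
    rw [this]
  · rw [← sum_filter]
    have h1 : (range (T.card + 1)).filter (fun r => r ≤ k) = range (T.card + 1) := by
      ext r; simp only [mem_filter, mem_range]; omega
    rw [h1]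
    rw [← sum_subset (by intro r hr; simp only [mem_range] at *; omega :
        range (T.card + 1) ⊆ range (k+1))]
    intro r hr hr'
    simp only [mem_range] at hr hr'
    rw [SRes_of_card_lt (by omega) lam, mul_zero]

lemma shift_Gamma {T : Finset (Fin n)} {m : ℕ} {lam : Fin n → ℝ}
    (hlam : ∀ j, 1 ≤ j → j ≤ m → 0 < SRes n T j lam) {t : ℝ} (ht : 0 ≤ t) :
    ∀ j, 1 ≤ j → j ≤ m → 0 < SRes n T j (fun i => lam i + t) := by
  intro j hj1 hj2
  rw [SRes_shift]
  refine sum_pos' (fun r hr => ?_) ⟨j, self_mem_range_succ j, ?_⟩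
  · rcases Nat.eq_zero_or_pos r with rfl | hr1
    · rw [SRes_zero]
      positivity
    · have := hlam r hr1 ((Nat.lt_succ_iff.1 (mem_range.1 hr)).trans hj2)
      positivity
  · simp only [Nat.sub_self, Nat.choose_zero_right, Nat.cast_one, pow_zero, one_mul, mul_one]
    exact hlam j hj1 hj2

lemma shift_Gamma_closed {T : Finset (Fin n)} {m : ℕ} {lam : Fin n → ℝ}
    (hm1 : 1 ≤ m) (hmT : m ≤ T.card)
    (h1 : ∀ j, 1 ≤ j → j ≤ m - 1 → 0 ≤ SRes n T j lam) (h2 : 0 < SRes n T m lam)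
    {t : ℝ} (ht : 0 < t) :
    ∀ j, 1 ≤ j → j ≤ m → 0 < SRes n T j (fun i => lam i + t) := by
  intro j hj1 hj2
  rw [SRes_shift]
  have hterm : ∀ r ∈ range (j+1),
      0 ≤ (((T.card - r).choose (j - r) : ℕ) : ℝ) * t ^ (j - r) * SRes n T r lam := by
    intro r hr
    rcases Nat.eq_zero_or_pos r with rfl | hr1
    · rw [SRes_zero]; positivity
    · rcases Nat.lt_or_ge r m with hrm | hrm
      · have := h1 r hr1 (by omega)
        positivity
      · have hrm' : r = m := by
          have := Nat.lt_succ_iff.1 (mem_range.1 hr); omega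
        subst hrm'
        have := h2.le
        positivity
  rcases Nat.lt_or_ge j m with hjm | hjm
  · refine sum_pos' hterm ⟨0, mem_range.2 (by omega), ?_⟩
    rw [SRes_zero, mul_one, Nat.sub_zero, Nat.sub_zero]
    have hchoose : 0 < (T.card).choose j := Nat.choose_pos (by omega)
    positivity
  · have hjm' : j = m := le_antisymm hj2 hjm
    subst hjm'
    refine sum_pos' hterm ⟨j, self_mem_range_succ j, ?_⟩
    simp only [Nat.sub_self, Nat.choose_zero_right, Nat.cast_one, pow_zero, one_mul, mul_one]
    exact h2

lemma SRes_shift_continuous (T : Finset (Fin n)) (k : ℕ) (lam : Fin n → ℝ) :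
    Continuous fun t : ℝ => SRes n T k (fun i => lam i + t) := by
  simp only [SRes]
  exact continuous_finset_sum _ fun A _ =>
    continuous_finset_prod _ fun i _ => continuous_const.add continuous_id

lemma nonneg_at_zero {g : ℝ → ℝ} (hc : Continuous g) (h : ∀ t : ℝ, 0 < t → 0 < g t) :
    0 ≤ g 0 := by
  have htd : Filter.Tendsto g (nhdsWithin 0 (Set.Ioi 0)) (nhds (g 0)) :=
    ((hc.tendsto 0).mono_left nhdsWithin_le_nhds)
  exact ge_of_tendsto htd (eventually_nhdsWithin_of_forall fun t ht => (h t ht).le)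

lemma main_ind (c : ℕ) :
    (∀ (T : Finset (Fin n)) (m : ℕ) (lam : Fin n → ℝ), m ≤ n →
      2*T.card*(n+2)+m ≤ c →
      (∀ j, 1 ≤ j → j ≤ m → 0 < SRes n T j lam) →
      ∀ i ∈ T, ∀ j, 1 ≤ j → j ≤ m - 1 → 0 < SRes n (T.erase i) j lam) ∧
    (∀ (R : Finset (Fin n)) (m : ℕ) (lam : Fin n → ℝ), m ≤ n →
      (2*R.card+1)*(n+2)+m ≤ c →
      1 ≤ m →
      (∀ j, 1 ≤ j → j ≤ m - 1 → 0 ≤ SRes n R j lam) →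
      SRes n R (m-1) lam = 0 → 0 < SRes n R m lam → False) := by
  induction c using Nat.strong_induction_on with
  | _ c IH =>
  constructor
  · -- KL part
    intro T m lam hmn hmeas hlam i hi j hj1 hj2
    have hm2 : 2 ≤ m := by omega
    have hmT : m ≤ T.card := by
      by_contra hc
      exact absurd (hlam m (by omega) le_rfl) (by rw [SRes_of_card_lt (by omega) lam]; simp)
    have hT1 : 1 ≤ T.card := by omega
    -- recursive KL at (T, m-1)
    have hKLrec : ∀ (mu : Fin n → ℝ), (∀ j, 1 ≤ j → j ≤ m - 1 → 0 < SRes n T j mu) →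
        ∀ j, 1 ≤ j → j ≤ m - 2 → 0 < SRes n (T.erase i) j mu := by
      intro mu hmu
      have hlt : 2*T.card*(n+2)+(m-1) < c := by omega
      have h := (IH _ hlt).1 T (m-1) mu (by omega) le_rfl hmu i hi
      intro j' hj'1 hj'2
      exact h j' hj'1 (by omega)
    rcases Nat.lt_or_ge j (m-1) with hjm | hjm
    · exact hKLrec lam (fun j' h1 h2 => hlam j' h1 (by omega)) j hj1 (by omega)
    have hj : j = m - 1 := by omega
    subst hj
    by_contra hneg
    push_neg at hneg
    -- large t positivity
    set g : ℝ → ℝ := fun t => SRes n (T.erase i) (m-1) (fun x => lam x + t) with hg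
    set t1 : ℝ := 1 + ∑ x : Fin n, |lam x| with ht1
    have ht1pos : (0:ℝ) ≤ t1 := by positivity
    have hentry : ∀ x : Fin n, 0 < lam x + t1 := by
      intro x
      have h1 : |lam x| ≤ ∑ y : Fin n, |lam y| :=
        single_le_sum (f := fun y => |lam y|) (fun y _ => abs_nonneg _) (mem_univ x)
      have h2 := neg_abs_le (lam x)
      simp only [ht1]
      nlinarith
    have hglarge : 0 < g t1 := by
      refine SRes_pos (fun x _ => hentry x) ?_
      rw [card_erase_of_mem hi]; omega
    -- IVT
    have hcont : ContinuousOn g (Set.Icc 0 t1) :=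
      (SRes_shift_continuous (T.erase i) (m-1) lam).continuousOn
    have hmem : (0:ℝ) ∈ Set.Icc (g 0) (g t1) := by
      constructor
      · have he : g 0 = SRes n (T.erase i) (m-1) lam := by
          simp only [hg, add_zero]
        rw [he]; exact hneg
      · exact hglarge.le
    obtain ⟨t0, ht0mem, ht0⟩ := intermediate_value_Icc ht1pos hcont hmem
    set mu : Fin n → ℝ := fun x => lam x + t0 with hmu
    have hmuG : ∀ j, 1 ≤ j → j ≤ m → 0 < SRes n T j mu :=
      shift_Gamma hlam ht0mem.1
    have hmu1 : ∀ j, 1 ≤ j → j ≤ m - 2 → 0 < SRes n (T.erase i) j mu :=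
      hKLrec mu (fun j' h1 h2 => hmuG j' h1 (by omega))
    have hmu0 : SRes n (T.erase i) (m-1) mu = 0 := ht0
    have hmuM : 0 < SRes n (T.erase i) m mu := by
      have hrw := SRes_erase hi (m-1) mu
      rw [show (m-1)+1 = m by omega] at hrw
      rw [hmu0, mul_zero, add_zero] at hrw
      rw [← hrw]
      exact hmuG m (by omega) le_rfl
    -- NoBad call
    have hlt : (2*(T.erase i).card+1)*(n+2)+m < c := by
      rw [card_erase_of_mem hi]
      have : (2*(T.card-1)+1)*(n+2) + (n+2) = 2*T.card*(n+2) := by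
        have h1 : 2*(T.card-1)+1+1 = 2*T.card := by omega
        calc (2*(T.card-1)+1)*(n+2) + (n+2) = ((2*(T.card-1)+1)+1)*(n+2) := by ring
          _ = 2*T.card*(n+2) := by rw [h1]
      omega
    refine (IH _ hlt).2 (T.erase i) m mu hmn le_rfl (by omega) ?_ ?_ hmuM
    · intro j' h1 h2
      rcases Nat.lt_or_ge j' (m-1) with h | h
      · exact (hmu1 j' h1 (by omega)).le
      · have : j' = m - 1 := by omega
        rw [this, hmu0]
    · exact hmu0
  · -- NoBad part
    intro R m lam hmn hmeas hm1 hge h0 hpos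
    rcases Nat.eq_or_lt_of_le hm1 with hm | hm2
    · rw [← hm] at h0
      simp only [Nat.sub_self, SRes_zero] at h0
      exact one_ne_zero h0
    have hm2 : 2 ≤ m := hm2
    have hmR : m ≤ R.card := by
      by_contra hc
      rw [SRes_of_card_lt (by omega) lam] at hpos
      exact lt_irrefl _ hpos
    -- erase any element keeps nonneg up to m-1
    have hKLlt : 2*R.card*(n+2)+m < c := by
      have : 2*R.card*(n+2) + (n+2) = (2*R.card+1)*(n+2) := by ring
      omega
    have herase : ∀ l ∈ R, ∀ j, 1 ≤ j → j ≤ m - 1 → 0 ≤ SRes n (R.erase l) j lam := by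
      intro l hl j hj1 hj2
      have hcont : Continuous fun t : ℝ => SRes n (R.erase l) j (fun x => lam x + t) :=
        SRes_shift_continuous (R.erase l) j lam
      have hposall : ∀ t : ℝ, 0 < t →
          0 < SRes n (R.erase l) j (fun x => lam x + t) := by
        intro t ht
        have hdef : ∀ j', 1 ≤ j' → j' ≤ m → 0 < SRes n R j' (fun x => lam x + t) :=
          shift_Gamma_closed hm1 hmR hge hpos ht
        exact (IH _ hKLlt).1 R m (fun x => lam x + t) hmn le_rfl hdef l hl j hj1 hj2
      have hres := nonneg_at_zero hcont hposall
      have he : SRes n (R.erase l) j (fun x => lam x + 0) = SRes n (R.erase l) j lam := by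
        simp only [add_zero]
      rw [← he]; exact hres
    -- sum of erasures at level m-1 is zero, so each is zero
    have hsum : ∑ l ∈ R, SRes n (R.erase l) (m-1) lam = 0 := by
      rw [sum_SRes_erase, h0, mul_zero]
    have hz : ∀ l ∈ R, SRes n (R.erase l) (m-1) lam = 0 := by
      rw [← sum_eq_zero_iff_of_nonneg (fun l hl => herase l hl (m-1) (by omega) le_rfl)]
      exact hsum
    have hRne : R.Nonempty := card_pos.1 (by omega)
    obtain ⟨l, hl⟩ := hRne
    have hEm : SRes n (R.erase l) m lam = SRes n R m lam := by
      have hrw := SRes_erase hl (m-1) lam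
      rw [show (m-1)+1 = m by omega] at hrw
      rw [hz l hl, mul_zero, add_zero] at hrw
      exact hrw.symm
    rcases Nat.eq_or_lt_of_le hmR with hmR' | hmR' 
    · rw [SRes_of_card_lt (by rw [card_erase_of_mem hl]; omega) lam] at hEm
      rw [← hEm] at hpos
      exact lt_irrefl _ hpos
    · have hlt : (2*(R.erase l).card+1)*(n+2)+m < c := by
        rw [card_erase_of_mem hl]
        have h1 : 2*(R.card-1)+1+2 = 2*R.card+1 := by omega
        have : (2*(R.card-1)+1)*(n+2) + 2*(n+2) = (2*R.card+1)*(n+2) := by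
          calc (2*(R.card-1)+1)*(n+2) + 2*(n+2) = ((2*(R.card-1)+1)+2)*(n+2) := by ring
            _ = (2*R.card+1)*(n+2) := by rw [h1]
        omega
      refine (IH _ hlt).2 (R.erase l) m lam hmn le_rfl hm1 ?_ (hz l hl) (hEm ▸ hpos)
      exact herase l hl

lemma Gamma_erase {T : Finset (Fin n)} {m : ℕ} {lam : Fin n → ℝ} (hmn : m ≤ n)
    (hlam : ∀ j, 1 ≤ j → j ≤ m → 0 < SRes n T j lam) {i : Fin n} (hi : i ∈ T) :
    ∀ j, 1 ≤ j → j ≤ m - 1 → 0 < SRes n (T.erase i) j lam :=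
  (main_ind (2*T.card*(n+2)+m)).1 T m lam hmn le_rfl hlam i hi

lemma Gamma_sdiff {m : ℕ} (hmn : m ≤ n) (D : Finset (Fin n)) :
    ∀ (T : Finset (Fin n)) (lam : Fin n → ℝ), D ⊆ T → D.card ≤ m - 1 →
    (∀ j, 1 ≤ j → j ≤ m → 0 < SRes n T j lam) →
    ∀ j, 1 ≤ j → j ≤ m - D.card → 0 < SRes n (T \ D) j lam := by
  classical
  induction D using Finset.induction_on with
  | empty =>
    intro T lam _ _ hlam j hj1 hj2
    rw [sdiff_empty]
    exact hlam j hj1 (by simpa using hj2)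
  | @insert a D ha ihD =>
    intro T lam hDT hDc hlam j hj1 hj2
    have hcardD : (insert a D).card = D.card + 1 := card_insert_of_notMem ha
    have hIH : ∀ j, 1 ≤ j → j ≤ m - D.card → 0 < SRes n (T \ D) j lam :=
      ihD T lam ((subset_insert a D).trans hDT) (by omega) hlam
    have haTD : a ∈ T \ D := mem_sdiff.2 ⟨hDT (mem_insert_self a D), ha⟩
    have hres := Gamma_erase (m := m - D.card) (by omega) hIH haTD
    have hset : (T \ D).erase a = T \ insert a D := by
      ext x
      simp only [mem_erase, mem_sdiff, mem_insert]
      tauto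
    rw [hset] at hres
    exact hres j hj1 (by omega)

lemma dominant_pos {T M : Finset (Fin n)} {m : ℕ} {lam : Fin n → ℝ} (hmn : m ≤ n)
    (hlam : ∀ j, 1 ≤ j → j ≤ m → 0 < SRes n T j lam)
    (hMT : M ⊆ T) (hkm : M.card ≤ m)
    (hdom : ∀ j ∈ M, ∀ x ∈ T \ M, lam x ≤ lam j) :
    ∀ j ∈ M, 0 < lam j := by
  intro j hj
  have hM1 : 1 ≤ M.card := card_pos.2 ⟨j, hj⟩
  have hsub : M.erase j ⊆ T := (erase_subset j M).trans hMT
  have hcard : (M.erase j).card = M.card - 1 := card_erase_of_mem hj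
  have h1 := Gamma_sdiff hmn (M.erase j) T lam hsub (by omega) hlam 1 le_rfl (by omega)
  rw [SRes_one] at h1
  have hbound : ∀ x ∈ T \ M.erase j, lam x ≤ lam j := by
    intro x hx
    obtain ⟨hxT, hxe⟩ := mem_sdiff.1 hx
    by_cases hxj : x = j
    · subst hxj; exact le_rfl
    · have hxM : x ∉ M := fun hxM => hxe (mem_erase.2 ⟨hxj, hxM⟩)
      exact hdom j hj x (mem_sdiff.2 ⟨hxT, hxM⟩)
  by_contra hneg
  push_neg at hneg
  have hle : ∑ x ∈ T \ M.erase j, lam x ≤ 0 :=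
    sum_nonpos fun x hx => (hbound x hx).trans hneg
  exact absurd h1 (not_lt.2 hle)

lemma prod_dominant_le :
    ∀ (k m : ℕ) (T M : Finset (Fin n)) (lam : Fin n → ℝ), m ≤ n →
    (∀ j, 1 ≤ j → j ≤ m → 0 < SRes n T j lam) →
    M ⊆ T → M.card = k → k ≤ m - 1 → 1 ≤ m →
    (∀ j ∈ M, ∀ x ∈ T \ M, lam x ≤ lam j) →
    ∏ i ∈ M, lam i ≤ SRes n T k lam := by
  intro k
  induction k with
  | zero =>
    intro m T M lam _ _ _ hMk _ _ _
    rw [card_eq_zero.1 hMk, prod_empty, SRes_zero]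
  | succ k ihk =>
    intro m T M lam hmn hlam hMT hMk hkm hm1 hdom
    have hm2 : 2 ≤ m := by omega
    have hMne : M.Nonempty := card_pos.1 (by omega)
    obtain ⟨i, hiM, himax⟩ := exists_max_image M lam hMne
    have hiT : i ∈ T := hMT hiM
    have hG' : ∀ j, 1 ≤ j → j ≤ m - 1 → 0 < SRes n (T.erase i) j lam :=
      Gamma_erase hmn hlam hiT
    have hpos2 : 0 < SRes n (T.erase i) (k+1) lam := hG' (k+1) (by omega) (by omega)
    have hMpos : ∀ j ∈ M, 0 < lam j :=
      dominant_pos hmn hlam hMT (by omega) hdom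
    have hIH : ∏ x ∈ M.erase i, lam x ≤ SRes n (T.erase i) k lam := by
      refine ihk (m-1) (T.erase i) (M.erase i) lam (by omega) hG'
        (erase_subset_erase i hMT) (by rw [card_erase_of_mem hiM, hMk]; omega) (by omega) (by omega) ?_
      intro j hj x hx
      obtain ⟨hxTe, hxMe⟩ := mem_sdiff.1 hx
      obtain ⟨hxi, hxT⟩ := mem_erase.1 hxTe
      by_cases hxM : x ∈ M
      · rcases mem_erase.1 hj with ⟨hji, hjM⟩
        exact absurd (mem_erase.2 ⟨hxi, hxM⟩) hxMe
      · exact hdom j (mem_of_mem_erase hj) x (mem_sdiff.2 ⟨hxT, hxM⟩)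
    have hprodnn : 0 ≤ ∏ x ∈ M.erase i, lam x :=
      (prod_pos fun x hx => hMpos x (mem_of_mem_erase hx)).le
    have hipos : 0 < lam i := hMpos i hiM
    have hrw := SRes_erase hiT k lam
    calc ∏ x ∈ M, lam x = lam i * ∏ x ∈ M.erase i, lam x := (mul_prod_erase M lam hiM).symm
      _ ≤ lam i * SRes n (T.erase i) k lam := mul_le_mul_of_nonneg_left hIH hipos.le
      _ ≤ SRes n (T.erase i) (k+1) lam + lam i * SRes n (T.erase i) k lam := by linarith
      _ = SRes n T (k+1) lam := hrw.symm

lemma exists_dominant (k : ℕ) (hk : k ≤ n) (lam : Fin n → ℝ) :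
    ∃ M : Finset (Fin n), M.card = k ∧
      ∀ j ∈ M, ∀ x ∈ (univ : Finset (Fin n)) \ M, lam x ≤ lam j := by
  induction k with
  | zero => exact ⟨∅, card_empty, by simp⟩
  | succ k ih =>
    obtain ⟨M, hMc, hMdom⟩ := ih (by omega)
    have hne : ((univ : Finset (Fin n)) \ M).Nonempty := by
      rw [← card_pos, card_sdiff_of_subset (subset_univ M), card_univ, Fintype.card_fin, hMc]; omega
    obtain ⟨x0, hx0, hmax⟩ := exists_max_image _ lam hne
    have hx0M : x0 ∉ M := (mem_sdiff.1 hx0).2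
    refine ⟨insert x0 M, by rw [card_insert_of_notMem hx0M, hMc], ?_⟩
    intro j hj x hx
    obtain ⟨hxu, hxi⟩ := mem_sdiff.1 hx
    have hxM : x ∉ M := fun h => hxi (mem_insert_of_mem h)
    have hxuM : x ∈ (univ : Finset (Fin n)) \ M := mem_sdiff.2 ⟨hxu, hxM⟩
    rcases mem_insert.1 hj with rfl | hjM
    · exact hmax x hxuM
    · exact hMdom j hjM x hxuM

theorem stmt4 (n m k : ℕ) (hk : 1 ≤ k) (hkm : k ≤ m - 1) (hmn : m ≤ n)
    (I : Finset (Fin n)) (hI : I.card = k) (lam : Fin n → ℝ)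
    (hlam : lam ∈ GammaCone n m) :
    |∏ i ∈ I, lam i| ≤ ((n - k : ℕ) : ℝ) ^ k * S n k lam := by
  classical
  have hm2 : 2 ≤ m := by
    rcases Nat.lt_or_ge m 2 with h | h
    · interval_cases m <;> omega
    · exact h
  have hG : ∀ j, 1 ≤ j → j ≤ m → 0 < SRes n (univ : Finset (Fin n)) j lam :=
    fun j h1 h2 => hlam j h1 h2
  have hkm' : k + 1 ≤ m := by omega
  have hkn : k + 1 ≤ n := by omega
  obtain ⟨M, hMc, hMdom⟩ := exists_dominant k (by omega) lam
  have hMpos : ∀ j ∈ M, 0 < lam j :=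
    dominant_pos hmn hG (subset_univ M) (by omega) hMdom
  have hMne : M.Nonempty := card_pos.1 (by omega)
  obtain ⟨jm, hjmM, hjmmin⟩ := exists_min_image M lam hMne
  have hjmpos : 0 < lam jm := hMpos jm hjmM
  set c : ℝ := ((n - k : ℕ) : ℝ) with hc
  have hnk1 : 1 ≤ n - k := by omega
  have hc1 : (1:ℝ) ≤ c := by rw [hc]; exact_mod_cast hnk1
  have hc0 : (0:ℝ) ≤ c := by linarith
  have hRG : 0 < ∑ x ∈ (univ : Finset (Fin n)) \ M, lam x := by
    have := Gamma_sdiff hmn M univ lam (subset_univ M) (by omega) hG 1 le_rfl (by omega)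
    rwa [SRes_one] at this
  have hcompl_card : ((univ : Finset (Fin n)) \ M).card = n - k := by
    rw [card_sdiff_of_subset (subset_univ M), card_univ, Fintype.card_fin, hMc]
  -- bound for entries outside M
  have hout : ∀ i ∈ (univ : Finset (Fin n)) \ M, |lam i| ≤ c * lam jm := by
    intro i hi
    rw [abs_le]
    have hcm1 : ((n - k - 1 : ℕ) : ℝ) = c - 1 := by
      rw [hc]
      have : ((n - k - 1 : ℕ) : ℝ) = ((n-k:ℕ):ℝ) - ((1:ℕ):ℝ) := by
        rw [← Nat.cast_sub hnk1]
      rw [this]; norm_num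
    constructor
    · -- -(c * lam jm) ≤ lam i
      have hsum : lam i + ∑ x ∈ ((univ : Finset (Fin n)) \ M).erase i, lam x
          = ∑ x ∈ (univ : Finset (Fin n)) \ M, lam x := add_sum_erase _ lam hi
      have hb : ∀ x ∈ ((univ : Finset (Fin n)) \ M).erase i, lam x ≤ lam jm := fun x hx =>
        hMdom jm hjmM x (mem_of_mem_erase hx)
      have hcard2 : (((univ : Finset (Fin n)) \ M).erase i).card = n - k - 1 := by
        rw [card_erase_of_mem hi, hcompl_card]
      have hsb : ∑ x ∈ ((univ : Finset (Fin n)) \ M).erase i, lam x ≤ (c - 1) * lam jm := by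
        calc ∑ x ∈ ((univ : Finset (Fin n)) \ M).erase i, lam x
            ≤ (((univ : Finset (Fin n)) \ M).erase i).card • lam jm :=
              sum_le_card_nsmul _ _ _ hb
          _ = ((n - k - 1 : ℕ) : ℝ) * lam jm := by rw [hcard2, nsmul_eq_mul]
          _ = (c - 1) * lam jm := by rw [hcm1]
      nlinarith
    · -- lam i ≤ c * lam jm
      have h1 : lam i ≤ lam jm := hMdom jm hjmM i hi
      nlinarith
  -- split the product
  have hIM : I \ (I ∩ M) = I \ M := sdiff_inter_self_left I M
  have hMI : M \ (M ∩ I) = M \ I := sdiff_inter_self_left M I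
  have hsplitI : (∏ i ∈ I \ M, |lam i|) * ∏ i ∈ I ∩ M, |lam i| = ∏ i ∈ I, |lam i| := by
    rw [← hIM]; exact prod_sdiff inter_subset_left
  have hsplitM : (∏ i ∈ M \ I, lam i) * ∏ i ∈ M ∩ I, lam i = ∏ i ∈ M, lam i := by
    rw [← hMI]; exact prod_sdiff inter_subset_left
  set a : ℕ := (I ∩ M).card with ha
  set d : ℕ := (I \ M).card with hd
  have hda : d + a = k := by rw [hd, ha, ← hI]; exact card_sdiff_add_card_inter I M
  have hdMI : (M \ I).card = d := by
    have h1 := card_sdiff_add_card_inter M I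
    rw [inter_comm, hMc, ← ha] at h1
    omega
  -- bounds
  have hb1 : ∏ i ∈ I ∩ M, |lam i| ≤ c ^ a * ∏ i ∈ I ∩ M, lam i := by
    have heq : ∏ i ∈ I ∩ M, |lam i| = ∏ i ∈ I ∩ M, lam i := by
      refine prod_congr rfl fun i hi => abs_of_pos (hMpos i (mem_of_mem_inter_right hi))
    have hpp : (0:ℝ) ≤ ∏ i ∈ I ∩ M, lam i :=
      (prod_pos fun i hi => hMpos i (mem_of_mem_inter_right hi)).le
    have hca : (1:ℝ) ≤ c ^ a := by
      calc (1:ℝ) = 1 ^ a := (one_pow a).symm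
        _ ≤ c ^ a := pow_le_pow_left₀ zero_le_one hc1 a
    rw [heq]
    nlinarith
  have hb2 : ∏ i ∈ I \ M, |lam i| ≤ c ^ d * ∏ i ∈ M \ I, lam i := by
    have h1 : ∏ i ∈ I \ M, |lam i| ≤ ∏ i ∈ I \ M, (c * lam jm) := by
      refine prod_le_prod (fun i _ => abs_nonneg _) fun i hi => ?_
      refine hout i (mem_sdiff.2 ⟨mem_univ i, (mem_sdiff.1 hi).2⟩)
    have h2 : ∏ i ∈ I \ M, (c * lam jm) = c ^ d * lam jm ^ d := by
      rw [prod_const, ← hd, mul_pow]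
    have h3 : lam jm ^ d ≤ ∏ i ∈ M \ I, lam i := by
      have : ∏ i ∈ M \ I, lam jm ≤ ∏ i ∈ M \ I, lam i :=
        prod_le_prod (fun i _ => hjmpos.le) fun i hi => hjmmin i (mem_sdiff.1 hi).1
      rwa [prod_const, hdMI] at this
    have hcd : (0:ℝ) ≤ c ^ d := pow_nonneg hc0 d
    calc ∏ i ∈ I \ M, |lam i| ≤ c ^ d * lam jm ^ d := by rw [← h2]; exact h1
      _ ≤ c ^ d * ∏ i ∈ M \ I, lam i := mul_le_mul_of_nonneg_left h3 hcd
  have hprodM : ∏ i ∈ M, lam i ≤ SRes n (univ : Finset (Fin n)) k lam :=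
    prod_dominant_le k m univ M lam hmn hG (subset_univ M) hMc hkm (by omega) hMdom
  have habs : |∏ i ∈ I, lam i| = ∏ i ∈ I, |lam i| := Finset.abs_prod I lam
  have hnn1 : (0:ℝ) ≤ ∏ i ∈ I \ M, |lam i| := prod_nonneg fun i _ => abs_nonneg _
  have hnn2 : (0:ℝ) ≤ ∏ i ∈ I ∩ M, |lam i| := prod_nonneg fun i _ => abs_nonneg _
  have hnn3 : (0:ℝ) ≤ c ^ d * ∏ i ∈ M \ I, lam i := by
    refine mul_nonneg (pow_nonneg hc0 d) ?_
    exact (prod_pos fun i hi => hMpos i (mem_sdiff.1 hi).1).le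
  have hSkey : S n k lam = SRes n (univ : Finset (Fin n)) k lam := rfl
  calc |∏ i ∈ I, lam i| = (∏ i ∈ I \ M, |lam i|) * ∏ i ∈ I ∩ M, |lam i| := by
        rw [habs, hsplitI]
    _ ≤ (c ^ d * ∏ i ∈ M \ I, lam i) * (c ^ a * ∏ i ∈ I ∩ M, lam i) :=
        mul_le_mul hb2 hb1 hnn2 hnn3
    _ = c ^ (d + a) * ((∏ i ∈ M \ I, lam i) * ∏ i ∈ M ∩ I, lam i) := by
        rw [pow_add, inter_comm M I]; ring
    _ = c ^ k * ∏ i ∈ M, lam i := by rw [hda, hsplitM]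
    _ ≤ c ^ k * S n k lam := by
        rw [hSkey]
        exact mul_le_mul_of_nonneg_left hprodM (pow_nonneg hc0 k)
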